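/- Let T be a tetrahedron in R^3 of volume 1, c the centroid of one of its facets, and X a point in T. Then the volume of the simplex conv{X_1, X_2, X_3, c} for any X_1, X_2, X_3 in T is at most 1/3. -/

import Mathlib

open MeasureTheory Matrix Set

noncomputable section

def D3 (x y z : Fin 3 → ℝ) : ℝ :=
  x 0 * (y 1 * z 2 - y 2 * z 1) - x 1 * (y 0 * z 2 - y 2 * z 0)
    + x 2 * (y 0 * z 1 - y 1 * z 0)

lemma det_rows (x y z : Fin 3 → ℝ) :
    (Matrix.of ![x, y, z]).det = D3 x y z := by
  rw [Matrix.det_fin_three]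
  simp [D3]
  ring

lemma D3_swap12 (x y z : Fin 3 → ℝ) : D3 x y z = -D3 y x z := by simp [D3]; ring
lemma D3_swap13 (x y z : Fin 3 → ℝ) : D3 x y z = -D3 z y x := by simp [D3]; ring

def Dlin (u w : Fin 3 → ℝ) : (Fin 3 → ℝ) →ₗ[ℝ] ℝ where
  toFun x := D3 x u w
  map_add' a b := by simp [D3]; ring
  map_smul' r a := by simp [D3, smul_eq_mul]; ring

def Daff (u w c : Fin 3 → ℝ) : (Fin 3 → ℝ) →ᵃ[ℝ] ℝ :=
  AffineMap.mk' (fun x => D3 (x - c) u w) (Dlin u w) c (by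
    intro p
    simp [Dlin, D3])

lemma max_step (v : Fin 4 → Fin 3 → ℝ) (u w c x : Fin 3 → ℝ)
    (hx : x ∈ convexHull ℝ (Set.range v)) :
    ∃ i : Fin 4, |D3 (x - c) u w| ≤ |D3 (v i - c) u w| := by
  have h1 : ConvexOn ℝ ((Daff u w c) ⁻¹' Set.univ) (norm ∘ (Daff u w c)) :=
    convexOn_univ_norm.comp_affineMap _
  have h2 : ConvexOn ℝ Set.univ (fun y => |D3 (y - c) u w|) := by
    exact h1
  obtain ⟨y, hy, hle⟩ := h2.exists_ge_of_mem_convexHull (Set.subset_univ _) hx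
  obtain ⟨i, rfl⟩ := hy
  exact ⟨i, hle⟩

lemma habs (r x y : ℝ) (h : x = r * y) (hr : |r| ≤ 1/3) : |x| ≤ 1/3 * |y| := by
  subst h
  rw [abs_mul]
  exact mul_le_mul_of_nonneg_right hr (abs_nonneg y)

lemma base (v : Fin 4 → Fin 3 → ℝ) (x y z : Fin 3 → ℝ)
    (hx : x ∈ ({v 0, v 1, v 2, v 3} : Set (Fin 3 → ℝ)))
    (hy : y ∈ ({v 0, v 1, v 2, v 3} : Set (Fin 3 → ℝ)))
    (hz : z ∈ ({v 0, v 1, v 2, v 3} : Set (Fin 3 → ℝ))) :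
    |D3 (x - (3:ℝ)⁻¹ • (v 0 + v 1 + v 2)) (y - (3:ℝ)⁻¹ • (v 0 + v 1 + v 2))
        (z - (3:ℝ)⁻¹ • (v 0 + v 1 + v 2))|
      ≤ 1/3 * |D3 (v 0 - v 3) (v 1 - v 3) (v 2 - v 3)| := by
  simp only [Set.mem_insert_iff, Set.mem_singleton_iff] at hx hy hz
  rcases hx with rfl | rfl | rfl | rfl
  · rcases hy with rfl | rfl | rfl | rfl
    · rcases hz with rfl | rfl | rfl | rfl
      · exact habs (0 : ℝ) _ _ (by simp only [D3, Pi.sub_apply, Pi.smul_apply, Pi.add_apply, smul_eq_mul]; ring) (by rw [abs_le]; constructor <;> norm_num)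
      · exact habs (0 : ℝ) _ _ (by simp only [D3, Pi.sub_apply, Pi.smul_apply, Pi.add_apply, smul_eq_mul]; ring) (by rw [abs_le]; constructor <;> norm_num)
      · exact habs (0 : ℝ) _ _ (by simp only [D3, Pi.sub_apply, Pi.smul_apply, Pi.add_apply, smul_eq_mul]; ring) (by rw [abs_le]; constructor <;> norm_num)
      · exact habs (0 : ℝ) _ _ (by simp only [D3, Pi.sub_apply, Pi.smul_apply, Pi.add_apply, smul_eq_mul]; ring) (by rw [abs_le]; constructor <;> norm_num)
    · rcases hz with rfl | rfl | rfl | rfl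
      · exact habs (0 : ℝ) _ _ (by simp only [D3, Pi.sub_apply, Pi.smul_apply, Pi.add_apply, smul_eq_mul]; ring) (by rw [abs_le]; constructor <;> norm_num)
      · exact habs (0 : ℝ) _ _ (by simp only [D3, Pi.sub_apply, Pi.smul_apply, Pi.add_apply, smul_eq_mul]; ring) (by rw [abs_le]; constructor <;> norm_num)
      · exact habs (0 : ℝ) _ _ (by simp only [D3, Pi.sub_apply, Pi.smul_apply, Pi.add_apply, smul_eq_mul]; ring) (by rw [abs_le]; constructor <;> norm_num)
      · exact habs (-(3:ℝ)⁻¹) _ _ (by simp only [D3, Pi.sub_apply, Pi.smul_apply, Pi.add_apply, smul_eq_mul]; ring) (by rw [abs_le]; constructor <;> norm_num)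
    · rcases hz with rfl | rfl | rfl | rfl
      · exact habs (0 : ℝ) _ _ (by simp only [D3, Pi.sub_apply, Pi.smul_apply, Pi.add_apply, smul_eq_mul]; ring) (by rw [abs_le]; constructor <;> norm_num)
      · exact habs (0 : ℝ) _ _ (by simp only [D3, Pi.sub_apply, Pi.smul_apply, Pi.add_apply, smul_eq_mul]; ring) (by rw [abs_le]; constructor <;> norm_num)
      · exact habs (0 : ℝ) _ _ (by simp only [D3, Pi.sub_apply, Pi.smul_apply, Pi.add_apply, smul_eq_mul]; ring) (by rw [abs_le]; constructor <;> norm_num)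
      · exact habs ((3:ℝ)⁻¹) _ _ (by simp only [D3, Pi.sub_apply, Pi.smul_apply, Pi.add_apply, smul_eq_mul]; ring) (by rw [abs_le]; constructor <;> norm_num)
    · rcases hz with rfl | rfl | rfl | rfl
      · exact habs (0 : ℝ) _ _ (by simp only [D3, Pi.sub_apply, Pi.smul_apply, Pi.add_apply, smul_eq_mul]; ring) (by rw [abs_le]; constructor <;> norm_num)
      · exact habs ((3:ℝ)⁻¹) _ _ (by simp only [D3, Pi.sub_apply, Pi.smul_apply, Pi.add_apply, smul_eq_mul]; ring) (by rw [abs_le]; constructor <;> norm_num)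
      · exact habs (-(3:ℝ)⁻¹) _ _ (by simp only [D3, Pi.sub_apply, Pi.smul_apply, Pi.add_apply, smul_eq_mul]; ring) (by rw [abs_le]; constructor <;> norm_num)
      · exact habs (0 : ℝ) _ _ (by simp only [D3, Pi.sub_apply, Pi.smul_apply, Pi.add_apply, smul_eq_mul]; ring) (by rw [abs_le]; constructor <;> norm_num)
  · rcases hy with rfl | rfl | rfl | rfl
    · rcases hz with rfl | rfl | rfl | rfl
      · exact habs (0 : ℝ) _ _ (by simp only [D3, Pi.sub_apply, Pi.smul_apply, Pi.add_apply, smul_eq_mul]; ring) (by rw [abs_le]; constructor <;> norm_num)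
      · exact habs (0 : ℝ) _ _ (by simp only [D3, Pi.sub_apply, Pi.smul_apply, Pi.add_apply, smul_eq_mul]; ring) (by rw [abs_le]; constructor <;> norm_num)
      · exact habs (0 : ℝ) _ _ (by simp only [D3, Pi.sub_apply, Pi.smul_apply, Pi.add_apply, smul_eq_mul]; ring) (by rw [abs_le]; constructor <;> norm_num)
      · exact habs ((3:ℝ)⁻¹) _ _ (by simp only [D3, Pi.sub_apply, Pi.smul_apply, Pi.add_apply, smul_eq_mul]; ring) (by rw [abs_le]; constructor <;> norm_num)
    · rcases hz with rfl | rfl | rfl | rfl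
      · exact habs (0 : ℝ) _ _ (by simp only [D3, Pi.sub_apply, Pi.smul_apply, Pi.add_apply, smul_eq_mul]; ring) (by rw [abs_le]; constructor <;> norm_num)
      · exact habs (0 : ℝ) _ _ (by simp only [D3, Pi.sub_apply, Pi.smul_apply, Pi.add_apply, smul_eq_mul]; ring) (by rw [abs_le]; constructor <;> norm_num)
      · exact habs (0 : ℝ) _ _ (by simp only [D3, Pi.sub_apply, Pi.smul_apply, Pi.add_apply, smul_eq_mul]; ring) (by rw [abs_le]; constructor <;> norm_num)
      · exact habs (0 : ℝ) _ _ (by simp only [D3, Pi.sub_apply, Pi.smul_apply, Pi.add_apply, smul_eq_mul]; ring) (by rw [abs_le]; constructor <;> norm_num)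
    · rcases hz with rfl | rfl | rfl | rfl
      · exact habs (0 : ℝ) _ _ (by simp only [D3, Pi.sub_apply, Pi.smul_apply, Pi.add_apply, smul_eq_mul]; ring) (by rw [abs_le]; constructor <;> norm_num)
      · exact habs (0 : ℝ) _ _ (by simp only [D3, Pi.sub_apply, Pi.smul_apply, Pi.add_apply, smul_eq_mul]; ring) (by rw [abs_le]; constructor <;> norm_num)
      · exact habs (0 : ℝ) _ _ (by simp only [D3, Pi.sub_apply, Pi.smul_apply, Pi.add_apply, smul_eq_mul]; ring) (by rw [abs_le]; constructor <;> norm_num)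
      · exact habs (-(3:ℝ)⁻¹) _ _ (by simp only [D3, Pi.sub_apply, Pi.smul_apply, Pi.add_apply, smul_eq_mul]; ring) (by rw [abs_le]; constructor <;> norm_num)
    · rcases hz with rfl | rfl | rfl | rfl
      · exact habs (-(3:ℝ)⁻¹) _ _ (by simp only [D3, Pi.sub_apply, Pi.smul_apply, Pi.add_apply, smul_eq_mul]; ring) (by rw [abs_le]; constructor <;> norm_num)
      · exact habs (0 : ℝ) _ _ (by simp only [D3, Pi.sub_apply, Pi.smul_apply, Pi.add_apply, smul_eq_mul]; ring) (by rw [abs_le]; constructor <;> norm_num)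
      · exact habs ((3:ℝ)⁻¹) _ _ (by simp only [D3, Pi.sub_apply, Pi.smul_apply, Pi.add_apply, smul_eq_mul]; ring) (by rw [abs_le]; constructor <;> norm_num)
      · exact habs (0 : ℝ) _ _ (by simp only [D3, Pi.sub_apply, Pi.smul_apply, Pi.add_apply, smul_eq_mul]; ring) (by rw [abs_le]; constructor <;> norm_num)
  · rcases hy with rfl | rfl | rfl | rfl
    · rcases hz with rfl | rfl | rfl | rfl
      · exact habs (0 : ℝ) _ _ (by simp only [D3, Pi.sub_apply, Pi.smul_apply, Pi.add_apply, smul_eq_mul]; ring) (by rw [abs_le]; constructor <;> norm_num)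
      · exact habs (0 : ℝ) _ _ (by simp only [D3, Pi.sub_apply, Pi.smul_apply, Pi.add_apply, smul_eq_mul]; ring) (by rw [abs_le]; constructor <;> norm_num)
      · exact habs (0 : ℝ) _ _ (by simp only [D3, Pi.sub_apply, Pi.smul_apply, Pi.add_apply, smul_eq_mul]; ring) (by rw [abs_le]; constructor <;> norm_num)
      · exact habs (-(3:ℝ)⁻¹) _ _ (by simp only [D3, Pi.sub_apply, Pi.smul_apply, Pi.add_apply, smul_eq_mul]; ring) (by rw [abs_le]; constructor <;> norm_num)
    · rcases hz with rfl | rfl | rfl | rfl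
      · exact habs (0 : ℝ) _ _ (by simp only [D3, Pi.sub_apply, Pi.smul_apply, Pi.add_apply, smul_eq_mul]; ring) (by rw [abs_le]; constructor <;> norm_num)
      · exact habs (0 : ℝ) _ _ (by simp only [D3, Pi.sub_apply, Pi.smul_apply, Pi.add_apply, smul_eq_mul]; ring) (by rw [abs_le]; constructor <;> norm_num)
      · exact habs (0 : ℝ) _ _ (by simp only [D3, Pi.sub_apply, Pi.smul_apply, Pi.add_apply, smul_eq_mul]; ring) (by rw [abs_le]; constructor <;> norm_num)
      · exact habs ((3:ℝ)⁻¹) _ _ (by simp only [D3, Pi.sub_apply, Pi.smul_apply, Pi.add_apply, smul_eq_mul]; ring) (by rw [abs_le]; constructor <;> norm_num)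
    · rcases hz with rfl | rfl | rfl | rfl
      · exact habs (0 : ℝ) _ _ (by simp only [D3, Pi.sub_apply, Pi.smul_apply, Pi.add_apply, smul_eq_mul]; ring) (by rw [abs_le]; constructor <;> norm_num)
      · exact habs (0 : ℝ) _ _ (by simp only [D3, Pi.sub_apply, Pi.smul_apply, Pi.add_apply, smul_eq_mul]; ring) (by rw [abs_le]; constructor <;> norm_num)
      · exact habs (0 : ℝ) _ _ (by simp only [D3, Pi.sub_apply, Pi.smul_apply, Pi.add_apply, smul_eq_mul]; ring) (by rw [abs_le]; constructor <;> norm_num)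
      · exact habs (0 : ℝ) _ _ (by simp only [D3, Pi.sub_apply, Pi.smul_apply, Pi.add_apply, smul_eq_mul]; ring) (by rw [abs_le]; constructor <;> norm_num)
    · rcases hz with rfl | rfl | rfl | rfl
      · exact habs ((3:ℝ)⁻¹) _ _ (by simp only [D3, Pi.sub_apply, Pi.smul_apply, Pi.add_apply, smul_eq_mul]; ring) (by rw [abs_le]; constructor <;> norm_num)
      · exact habs (-(3:ℝ)⁻¹) _ _ (by simp only [D3, Pi.sub_apply, Pi.smul_apply, Pi.add_apply, smul_eq_mul]; ring) (by rw [abs_le]; constructor <;> norm_num)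
      · exact habs (0 : ℝ) _ _ (by simp only [D3, Pi.sub_apply, Pi.smul_apply, Pi.add_apply, smul_eq_mul]; ring) (by rw [abs_le]; constructor <;> norm_num)
      · exact habs (0 : ℝ) _ _ (by simp only [D3, Pi.sub_apply, Pi.smul_apply, Pi.add_apply, smul_eq_mul]; ring) (by rw [abs_le]; constructor <;> norm_num)
  · rcases hy with rfl | rfl | rfl | rfl
    · rcases hz with rfl | rfl | rfl | rfl
      · exact habs (0 : ℝ) _ _ (by simp only [D3, Pi.sub_apply, Pi.smul_apply, Pi.add_apply, smul_eq_mul]; ring) (by rw [abs_le]; constructor <;> norm_num)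
      · exact habs (-(3:ℝ)⁻¹) _ _ (by simp only [D3, Pi.sub_apply, Pi.smul_apply, Pi.add_apply, smul_eq_mul]; ring) (by rw [abs_le]; constructor <;> norm_num)
      · exact habs ((3:ℝ)⁻¹) _ _ (by simp only [D3, Pi.sub_apply, Pi.smul_apply, Pi.add_apply, smul_eq_mul]; ring) (by rw [abs_le]; constructor <;> norm_num)
      · exact habs (0 : ℝ) _ _ (by simp only [D3, Pi.sub_apply, Pi.smul_apply, Pi.add_apply, smul_eq_mul]; ring) (by rw [abs_le]; constructor <;> norm_num)
    · rcases hz with rfl | rfl | rfl | rfl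
      · exact habs ((3:ℝ)⁻¹) _ _ (by simp only [D3, Pi.sub_apply, Pi.smul_apply, Pi.add_apply, smul_eq_mul]; ring) (by rw [abs_le]; constructor <;> norm_num)
      · exact habs (0 : ℝ) _ _ (by simp only [D3, Pi.sub_apply, Pi.smul_apply, Pi.add_apply, smul_eq_mul]; ring) (by rw [abs_le]; constructor <;> norm_num)
      · exact habs (-(3:ℝ)⁻¹) _ _ (by simp only [D3, Pi.sub_apply, Pi.smul_apply, Pi.add_apply, smul_eq_mul]; ring) (by rw [abs_le]; constructor <;> norm_num)
      · exact habs (0 : ℝ) _ _ (by simp only [D3, Pi.sub_apply, Pi.smul_apply, Pi.add_apply, smul_eq_mul]; ring) (by rw [abs_le]; constructor <;> norm_num)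
    · rcases hz with rfl | rfl | rfl | rfl
      · exact habs (-(3:ℝ)⁻¹) _ _ (by simp only [D3, Pi.sub_apply, Pi.smul_apply, Pi.add_apply, smul_eq_mul]; ring) (by rw [abs_le]; constructor <;> norm_num)
      · exact habs ((3:ℝ)⁻¹) _ _ (by simp only [D3, Pi.sub_apply, Pi.smul_apply, Pi.add_apply, smul_eq_mul]; ring) (by rw [abs_le]; constructor <;> norm_num)
      · exact habs (0 : ℝ) _ _ (by simp only [D3, Pi.sub_apply, Pi.smul_apply, Pi.add_apply, smul_eq_mul]; ring) (by rw [abs_le]; constructor <;> norm_num)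
      · exact habs (0 : ℝ) _ _ (by simp only [D3, Pi.sub_apply, Pi.smul_apply, Pi.add_apply, smul_eq_mul]; ring) (by rw [abs_le]; constructor <;> norm_num)
    · rcases hz with rfl | rfl | rfl | rfl
      · exact habs (0 : ℝ) _ _ (by simp only [D3, Pi.sub_apply, Pi.smul_apply, Pi.add_apply, smul_eq_mul]; ring) (by rw [abs_le]; constructor <;> norm_num)
      · exact habs (0 : ℝ) _ _ (by simp only [D3, Pi.sub_apply, Pi.smul_apply, Pi.add_apply, smul_eq_mul]; ring) (by rw [abs_le]; constructor <;> norm_num)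
      · exact habs (0 : ℝ) _ _ (by simp only [D3, Pi.sub_apply, Pi.smul_apply, Pi.add_apply, smul_eq_mul]; ring) (by rw [abs_le]; constructor <;> norm_num)
      · exact habs (0 : ℝ) _ _ (by simp only [D3, Pi.sub_apply, Pi.smul_apply, Pi.add_apply, smul_eq_mul]; ring) (by rw [abs_le]; constructor <;> norm_num)

lemma mem_four (v : Fin 4 → Fin 3 → ℝ) (i : Fin 4) :
    v i ∈ ({v 0, v 1, v 2, v 3} : Set (Fin 3 → ℝ)) := by
  fin_cases i <;> simp

lemma key (v : Fin 4 → Fin 3 → ℝ) (x₁ x₂ x₃ : Fin 3 → ℝ)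
    (h1 : x₁ ∈ convexHull ℝ (Set.range v)) (h2 : x₂ ∈ convexHull ℝ (Set.range v))
    (h3 : x₃ ∈ convexHull ℝ (Set.range v)) :
    |D3 (x₁ - (3:ℝ)⁻¹ • (v 0 + v 1 + v 2)) (x₂ - (3:ℝ)⁻¹ • (v 0 + v 1 + v 2))
        (x₃ - (3:ℝ)⁻¹ • (v 0 + v 1 + v 2))|
      ≤ 1/3 * |D3 (v 0 - v 3) (v 1 - v 3) (v 2 - v 3)| := by
  set c := (3:ℝ)⁻¹ • (v 0 + v 1 + v 2) with hc
  obtain ⟨a, ha⟩ := max_step v (x₂ - c) (x₃ - c) c x₁ h1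
  obtain ⟨b, hb⟩ := max_step v (v a - c) (x₃ - c) c x₂ h2
  obtain ⟨d, hd⟩ := max_step v (v a - c) (v b - c) c x₃ h3
  calc |D3 (x₁ - c) (x₂ - c) (x₃ - c)| ≤ |D3 (v a - c) (x₂ - c) (x₃ - c)| := ha
    _ = |D3 (x₂ - c) (v a - c) (x₃ - c)| := by rw [D3_swap12 (x₂ - c), abs_neg]
    _ ≤ |D3 (v b - c) (v a - c) (x₃ - c)| := hb
    _ = |D3 (x₃ - c) (v a - c) (v b - c)| := by rw [D3_swap13 (x₃ - c), abs_neg]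
    _ ≤ |D3 (v d - c) (v a - c) (v b - c)| := hd
    _ ≤ 1/3 * |D3 (v 0 - v 3) (v 1 - v 3) (v 2 - v 3)| :=
        base v _ _ _ (mem_four v d) (mem_four v a) (mem_four v b)

lemma colfact (a b d : Fin 3 → ℝ) (i : Fin 3) :
    ((Matrix.of ![a, b, d])ᵀ).mulVec (Pi.single i 1) = ![a, b, d] i := by
  funext j
  rw [Matrix.mulVec_single]
  simp [Matrix.transpose_apply]

theorem sub_simplex_volume_le_third (v : Fin 4 → (Fin 3 → ℝ))
    (hv : AffineIndependent ℝ v) (T : Set (Fin 3 → ℝ))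
    (hT : T = convexHull ℝ (Set.range v)) (hvol : volume T = 1)
    (c : Fin 3 → ℝ) (hc : c = (3:ℝ)⁻¹ • (v 0 + v 1 + v 2)) :
    ∀ x₁ x₂ x₃ : Fin 3 → ℝ, x₁ ∈ T → x₂ ∈ T → x₃ ∈ T →
      volume (convexHull ℝ ({x₁, x₂, x₃, c} : Set (Fin 3 → ℝ))) ≤ 1 / 3 := by
  subst hT
  intro x₁ x₂ x₃ h1 h2 h3
  set S := convexHull ℝ (Set.range v) with hS
  set Vm : Matrix (Fin 3) (Fin 3) ℝ := (Matrix.of ![v 0 - v 3, v 1 - v 3, v 2 - v 3])ᵀ with hVm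
  set Xm : Matrix (Fin 3) (Fin 3) ℝ := (Matrix.of ![x₁ - c, x₂ - c, x₃ - c])ᵀ with hXm
  have hdV : Vm.det = D3 (v 0 - v 3) (v 1 - v 3) (v 2 - v 3) := by
    rw [hVm, Matrix.det_transpose, det_rows]
  have hdX : Xm.det = D3 (x₁ - c) (x₂ - c) (x₃ - c) := by
    rw [hXm, Matrix.det_transpose, det_rows]
  -- linear independence of the edge vectors
  have hli : LinearIndependent ℝ (fun i : Fin 3 => v i.castSucc - v 3) := by
    have h := (affineIndependent_iff_linearIndependent_vsub ℝ v 3).mp hv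
    have hcomp := h.comp
      (fun i : Fin 3 => (⟨i.castSucc, by simp [Fin.ext_iff]; omega⟩ : {x : Fin 4 // x ≠ 3}))
      (fun i j hij => by
        simpa [Fin.ext_iff, Subtype.ext_iff] using hij)
    simpa [vsub_eq_sub, Function.comp_def] using hcomp
  have hcard : Fintype.card (Fin 3) = Module.finrank ℝ (Fin 3 → ℝ) := by
    simp [Module.finrank_fintype_fun_eq_card]
  have hspan : Submodule.span ℝ (Set.range (fun i : Fin 3 => v i.castSucc - v 3)) = ⊤ := by
    have := (basisOfLinearIndependentOfCardEqFinrank hli hcard).span_eq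
    rwa [coe_basisOfLinearIndependentOfCardEqFinrank] at this
  have hunit : IsUnit Vm.det := by
    have h := (Module.Basis.is_basis_iff_det (Pi.basisFun ℝ (Fin 3))).mp ⟨hli, hspan⟩
    have hm : (Pi.basisFun ℝ (Fin 3)).toMatrix (fun i : Fin 3 => v i.castSucc - v 3) = Vm := by
      ext i j
      fin_cases j <;>
        simp [Module.Basis.toMatrix_apply, hVm, Matrix.vecHead, Matrix.vecTail, Matrix.transpose_apply,
          Fin.castSucc, Fin.castAdd, Fin.castLE]
    rwa [Module.Basis.det_apply, hm] at h
  have hVne : Vm.det ≠ 0 := by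
    intro h0; rw [h0] at hunit; simpa using hunit
  set A : Matrix (Fin 3) (Fin 3) ℝ := Xm * Vm⁻¹ with hA
  have hAV : A * Vm = Xm := Matrix.nonsing_inv_mul_cancel_right Vm Xm hunit
  have hAe : ∀ i : Fin 3, A.mulVec (![v 0 - v 3, v 1 - v 3, v 2 - v 3] i)
      = ![x₁ - c, x₂ - c, x₃ - c] i := by
    intro i
    rw [← colfact (v 0 - v 3) (v 1 - v 3) (v 2 - v 3) i, Matrix.mulVec_mulVec, hAV,
      colfact]
  -- the affine map
  set g : (Fin 3 → ℝ) →ᵃ[ℝ] (Fin 3 → ℝ) :=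
    AffineMap.mk' (fun z => A.mulVec (z - v 3) + c) (Matrix.toLin' A) (v 3)
      (by
        intro p
        show A.mulVec (p - v 3) + c = A.mulVec (p - v 3) + (A.mulVec (v 3 - v 3) + c)
        simp) with hg
  have hgapp : ∀ z, g z = A.mulVec (z - v 3) + c := fun z => rfl
  have h0 : g (v 0) = x₁ := by
    rw [hgapp]
    have := hAe 0
    simp only [Matrix.cons_val_zero] at this
    rw [this]; abel
  have hx1 : g (v 1) = x₂ := by
    rw [hgapp]
    have := hAe 1
    simp only [Matrix.cons_val_one, Matrix.cons_val_zero] at this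
    rw [this]; abel
  have hx2 : g (v 2) = x₃ := by
    rw [hgapp]
    have := hAe 2
    simp only [Matrix.cons_val_two, Matrix.tail_cons, Matrix.head_cons] at this
    rw [this]; abel
  have hx3 : g (v 3) = c := by
    rw [hgapp]; simp
  have hrange : g '' (Set.range v) = ({x₁, x₂, x₃, c} : Set (Fin 3 → ℝ)) := by
    apply Set.Subset.antisymm
    · rintro y ⟨z, ⟨j, rfl⟩, rfl⟩
      fin_cases j
      · show g (v 0) ∈ _; rw [h0]; exact Set.mem_insert _ _
      · show g (v 1) ∈ _; rw [hx1]; exact Set.mem_insert_of_mem _ (Set.mem_insert _ _)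
      · show g (v 2) ∈ _
        rw [hx2]; exact Set.mem_insert_of_mem _ (Set.mem_insert_of_mem _ (Set.mem_insert _ _))
      · show g (v 3) ∈ _
        rw [hx3]
        exact Set.mem_insert_of_mem _ (Set.mem_insert_of_mem _ (Set.mem_insert_of_mem _ rfl))
    · intro y hy
      rcases hy with rfl | rfl | rfl | rfl
      · exact ⟨v 0, Set.mem_range_self 0, h0⟩
      · exact ⟨v 1, Set.mem_range_self 1, hx1⟩
      · exact ⟨v 2, Set.mem_range_self 2, hx2⟩
      · exact ⟨v 3, Set.mem_range_self 3, hx3⟩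
  have himg : g '' S = convexHull ℝ ({x₁, x₂, x₃, c} : Set (Fin 3 → ℝ)) := by
    rw [hS, AffineMap.image_convexHull, hrange]
  -- volume of the image
  have hvolg : volume (g '' S)
      = ENNReal.ofReal |LinearMap.det (Matrix.toLin' A)| * volume S := by
    have e1 : g '' S = (fun z => z + c) ''
        ((fun z => A.mulVec z) '' ((fun z => z + (-(v 3))) '' S)) := by
      rw [Set.image_image, Set.image_image]
      apply Set.image_congr'
      intro z
      rw [hgapp, sub_eq_add_neg]
    have e2 : (fun z : Fin 3 → ℝ => z + c) '' ((fun z => A.mulVec z) '' ((fun z => z + (-(v 3))) '' S))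
        = (fun z : Fin 3 → ℝ => z + (-c)) ⁻¹'
          ((fun z => A.mulVec z) '' ((fun z => z + (-(v 3))) '' S)) :=
      congrFun (Set.image_eq_preimage_of_inverse (fun z => by simp) (fun z => by simp)) _
    have e3 : (fun z : Fin 3 → ℝ => z + (-(v 3))) '' S
        = (fun z : Fin 3 → ℝ => z + v 3) ⁻¹' S :=
      congrFun (Set.image_eq_preimage_of_inverse (fun z => by simp) (fun z => by simp)) _
    rw [e1, e2, measure_preimage_add_right, e3]
    have : (fun z : Fin 3 → ℝ => A.mulVec z) = ⇑(Matrix.toLin' A) := by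
      funext z; simp [Matrix.toLin'_apply]
    rw [this, Measure.addHaar_image_linearMap, measure_preimage_add_right]
  -- determinant bound
  have hdet : |LinearMap.det (Matrix.toLin' A)| ≤ 1/3 := by
    have hdA : LinearMap.det (Matrix.toLin' A) = Xm.det * Vm.det⁻¹ := by
      rw [LinearMap.det_toLin', hA, Matrix.det_mul, Matrix.det_nonsing_inv,
        Ring.inverse_eq_inv']
    have hkey := key v x₁ x₂ x₃ (by rw [hS] at h1; exact h1) (by rw [hS] at h2; exact h2)
      (by rw [hS] at h3; exact h3)
    rw [← hc] at hkey
    have hVabs : |D3 (v 0 - v 3) (v 1 - v 3) (v 2 - v 3)| ≠ 0 :=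
      abs_ne_zero.mpr (hdV ▸ hVne)
    rw [hdA, abs_mul, abs_inv, hdX, hdV]
    calc |D3 (x₁ - c) (x₂ - c) (x₃ - c)| * |D3 (v 0 - v 3) (v 1 - v 3) (v 2 - v 3)|⁻¹
        ≤ (1/3 * |D3 (v 0 - v 3) (v 1 - v 3) (v 2 - v 3)|)
            * |D3 (v 0 - v 3) (v 1 - v 3) (v 2 - v 3)|⁻¹ :=
          mul_le_mul_of_nonneg_right hkey (by positivity)
      _ = 1/3 := by field_simp
  calc volume (convexHull ℝ ({x₁, x₂, x₃, c} : Set (Fin 3 → ℝ)))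
      = volume (g '' S) := by rw [himg]
    _ = ENNReal.ofReal |LinearMap.det (Matrix.toLin' A)| * volume S := hvolg
    _ = ENNReal.ofReal |LinearMap.det (Matrix.toLin' A)| := by rw [hvol, mul_one]
    _ ≤ ENNReal.ofReal (1/3) := ENNReal.ofReal_le_ofReal hdet
    _ = 1/3 := by
        rw [ENNReal.ofReal_div_of_pos (by norm_num)]
        norm_num
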